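/- Let λ : [0,∞) → ℝ be continuous, nonnegative, nonincreasing with b₀ = ∫₀^∞ tλ(t)dt < ∞, b₁ = ∫₀^∞ λ(t)dt, and h > 0. Define ρ(t) = ∫₀ᵗ sλ(s)ds + ∫₀ᵗ λ(s)/(h + ∫₀ˢ λ(u)(hu+1)du) ds + log h. Then ρ is nondecreasing and ρ(t) ≤ b₀ + log(h(1+b₀)+b₁) for all t ≥ 0. -/

import Mathlib

open MeasureTheory

/-- With `l` continuous, nonnegative, nonincreasing, `b₀ = ∫₀^∞ t·l t dt < ∞`,
`b₁ = ∫₀^∞ l t dt`, `h > 0`, the function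
`ρ t = ∫₀ᵗ s·l s ds + ∫₀ᵗ l s/(h + ∫₀ˢ l u·(h·u+1) du) ds + log h`
is nondecreasing and bounded above by `b₀ + log (h(1+b₀)+b₁)`. -/
theorem stmt_19 (l : ℝ → ℝ) (h : ℝ)
    (hl : ContinuousOn l (Set.Ici 0))
    (hlnn : ∀ t ≥ (0:ℝ), 0 ≤ l t)
    (hlmono : AntitoneOn l (Set.Ici 0))
    (hb0int : IntegrableOn (fun t => t * l t) (Set.Ioi 0))
    (hb1int : IntegrableOn l (Set.Ioi 0))
    (hh : 0 < h) :
    MonotoneOn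
      (fun t => (∫ s in (0:ℝ)..t, s * l s) +
        (∫ s in (0:ℝ)..t, l s / (h + ∫ u in (0:ℝ)..s, l u * (h * u + 1))) +
        Real.log h) (Set.Ici 0) ∧
    ∀ t ≥ (0:ℝ),
      (∫ s in (0:ℝ)..t, s * l s) +
        (∫ s in (0:ℝ)..t, l s / (h + ∫ u in (0:ℝ)..s, l u * (h * u + 1))) +
        Real.log h ≤
      (∫ s in Set.Ioi (0:ℝ), s * l s) +
        Real.log (h * (1 + ∫ s in Set.Ioi (0:ℝ), s * l s) +
          ∫ s in Set.Ioi (0:ℝ), l s) := by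
  set L : ℝ → ℝ := fun s => l (max s 0) with hLdef
  have hLc : Continuous L :=
    hl.comp_continuous (continuous_id.max continuous_const) (fun x => Set.mem_Ici.mpr (le_max_right _ _))
  have hLnn : ∀ s, 0 ≤ L s := fun s => hlnn _ (le_max_right _ _)
  have hLeq : ∀ s ≥ (0:ℝ), L s = l s := fun s hs => by simp [hLdef, max_eq_left hs]
  set F : ℝ → ℝ := fun s => h + ∫ u in (0:ℝ)..s, L u * (h * u + 1) with hFdef
  have hgc : Continuous (fun u => L u * (h * u + 1)) := hLc.mul ((continuous_const.mul continuous_id).add continuous_const)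
  have hFd : ∀ s, HasDerivAt F (L s * (h * s + 1)) s := by
    intro s
    have := intervalIntegral.integral_hasDerivAt_right
      (hgc.intervalIntegrable 0 s) (hgc.stronglyMeasurableAtFilter _ _) hgc.continuousAt
    exact (this.const_add h)
  have hFc : Continuous F := continuous_iff_continuousAt.2 fun s => (hFd s).continuousAt
  have hFpos : ∀ s ≥ (0:ℝ), 0 < F s := by
    intro s hs
    have : (0:ℝ) ≤ ∫ u in (0:ℝ)..s, L u * (h * u + 1) := by
      apply intervalIntegral.integral_nonneg hs
      intro u hu
      have : (0:ℝ) ≤ h * u + 1 := by nlinarith [hu.1]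
      exact mul_nonneg (hLnn u) this
    simp only [hFdef]; linarith
  have hF0 : F 0 = h := by simp [hFdef]
  -- congruence lemmas replacing l by L on [0, t]
  have hinner : ∀ s ≥ (0:ℝ),
      (∫ u in (0:ℝ)..s, l u * (h * u + 1)) = ∫ u in (0:ℝ)..s, L u * (h * u + 1) := by
    intro s hs
    apply intervalIntegral.integral_congr
    intro u hu
    rw [Set.uIcc_of_le hs] at hu
    simp only [hLeq u hu.1]
  have hcongr2 : ∀ t ≥ (0:ℝ),
      (∫ s in (0:ℝ)..t, l s / (h + ∫ u in (0:ℝ)..s, l u * (h * u + 1))) =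
      ∫ s in (0:ℝ)..t, L s / F s := by
    intro t ht
    apply intervalIntegral.integral_congr
    intro s hs
    rw [Set.uIcc_of_le ht] at hs
    simp only [hFdef, hLeq s hs.1, hinner s hs.1]
  have hcongr1 : ∀ t ≥ (0:ℝ),
      (∫ s in (0:ℝ)..t, s * l s) = ∫ s in (0:ℝ)..t, s * L s := by
    intro t ht
    apply intervalIntegral.integral_congr
    intro s hs
    rw [Set.uIcc_of_le ht] at hs
    simp only [hLeq s hs.1]
  have hcongr3 : ∀ t ≥ (0:ℝ), (∫ s in (0:ℝ)..t, l s) = ∫ s in (0:ℝ)..t, L s := by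
    intro t ht
    apply intervalIntegral.integral_congr
    intro s hs
    rw [Set.uIcc_of_le ht] at hs
    simp only [hLeq s hs.1]
  -- tail bound
  have htail : ∀ (f : ℝ → ℝ), IntegrableOn f (Set.Ioi 0) → (∀ s > (0:ℝ), 0 ≤ f s) →
      ∀ t ≥ (0:ℝ), (∫ s in (0:ℝ)..t, f s) ≤ ∫ s in Set.Ioi (0:ℝ), f s := by
    intro f hfint hfnn t ht
    rw [intervalIntegral.integral_of_le ht]
    apply setIntegral_mono_set hfint
    · filter_upwards [self_mem_ae_restrict measurableSet_Ioi] with x hx using hfnn x hx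
    · exact Filter.Eventually.of_forall (fun x hx => hx.1)
  set b0 : ℝ := ∫ s in Set.Ioi (0:ℝ), s * l s with hb0
  set b1 : ℝ := ∫ s in Set.Ioi (0:ℝ), l s with hb1
  have hb0nn : 0 ≤ b0 := setIntegral_nonneg measurableSet_Ioi
    (fun x hx => mul_nonneg (le_of_lt hx) (hlnn x (le_of_lt hx)))
  have hb1nn : 0 ≤ b1 := setIntegral_nonneg measurableSet_Ioi (fun x hx => hlnn x (le_of_lt hx))
  have hCpos : 0 < h * (1 + b0) + b1 := by nlinarith
  -- F t ≤ h * (1 + b0) + b1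
  have hFle : ∀ t ≥ (0:ℝ), F t ≤ h * (1 + b0) + b1 := by
    intro t ht
    have hsplit : (∫ u in (0:ℝ)..t, L u * (h * u + 1)) =
        h * (∫ u in (0:ℝ)..t, u * L u) + ∫ u in (0:ℝ)..t, L u := by
      have e : ∀ u : ℝ, L u * (h * u + 1) = h * (u * L u) + L u := fun u => by ring
      simp only [e]
      have hc1 : Continuous (fun u : ℝ => h * (u * L u)) := continuous_const.mul (continuous_id.mul hLc)
      rw [intervalIntegral.integral_add
        (hc1.intervalIntegrable 0 t)
        (hLc.intervalIntegrable 0 t),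
        intervalIntegral.integral_const_mul]
    have h1 : (∫ u in (0:ℝ)..t, u * L u) ≤ b0 := by
      rw [← hcongr1 t ht]
      exact htail _ hb0int (fun s hs => mul_nonneg (le_of_lt hs) (hlnn s (le_of_lt hs))) t ht
    have h2 : (∫ u in (0:ℝ)..t, L u) ≤ b1 := by
      rw [← hcongr3 t ht]
      exact htail _ hb1int (fun s hs => hlnn s (le_of_lt hs)) t ht
    simp only [hFdef, hsplit]
    nlinarith
  -- key: ∫₀ᵗ L/F ≤ log (F t) - log h
  have hkey : ∀ t ≥ (0:ℝ), (∫ s in (0:ℝ)..t, L s / F s) ≤ Real.log (F t) - Real.log h := by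
    intro t ht
    have huIcc : Set.uIcc (0:ℝ) t = Set.Icc 0 t := Set.uIcc_of_le ht
    have hFne : ∀ s ∈ Set.uIcc (0:ℝ) t, F s ≠ 0 := by
      intro s hs; rw [huIcc] at hs; exact (hFpos s hs.1).ne'
    have hFcon : ContinuousOn (fun s => L s * (h * s + 1) / F s) (Set.uIcc (0:ℝ) t) :=
      (hgc.continuousOn).div hFc.continuousOn hFne
    have hderiv : ∀ s ∈ Set.uIcc (0:ℝ) t,
        HasDerivAt (fun x => Real.log (F x)) (L s * (h * s + 1) / F s) s :=
      fun s hs => (hFd s).log (hFne s hs)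
    have hftc := intervalIntegral.integral_eq_sub_of_hasDerivAt hderiv
      (hFcon.intervalIntegrable)
    rw [hF0] at hftc
    rw [← hftc]
    apply intervalIntegral.integral_mono_on ht
    · apply ContinuousOn.intervalIntegrable
      exact hLc.continuousOn.div hFc.continuousOn hFne
    · exact hFcon.intervalIntegrable
    · intro s hs
      have hFs : 0 < F s := hFpos s hs.1
      have h1 : L s ≤ L s * (h * s + 1) := by
        nlinarith [mul_nonneg (hLnn s) (mul_nonneg hh.le hs.1)]
      gcongr
  constructor
  · -- monotone
    intro a ha b hb hab
    simp only [Set.mem_Ici] at ha hb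
    simp only
    rw [hcongr1 a ha, hcongr2 a ha, hcongr1 b hb, hcongr2 b hb]
    have huIccb : Set.uIcc (0:ℝ) b = Set.Icc 0 b := Set.uIcc_of_le hb
    have hFneb : ∀ s ∈ Set.uIcc (0:ℝ) b, F s ≠ 0 := by
      intro s hs; rw [huIccb] at hs; exact (hFpos s hs.1).ne'
    have hint1b : IntervalIntegrable (fun s => s * L s) volume 0 b :=
      (continuous_id.mul hLc).intervalIntegrable 0 b
    have hint1a : IntervalIntegrable (fun s => s * L s) volume 0 a :=
      (continuous_id.mul hLc).intervalIntegrable 0 a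
    have hint2b : IntervalIntegrable (fun s => L s / F s) volume 0 b :=
      (hLc.continuousOn.div hFc.continuousOn hFneb).intervalIntegrable
    have hint2a : IntervalIntegrable (fun s => L s / F s) volume 0 a :=
      hint2b.mono_set (by rw [Set.uIcc_of_le ha, huIccb]; exact Set.Icc_subset_Icc le_rfl hab)
    have e1 : (∫ s in (0:ℝ)..b, s * L s) - ∫ s in (0:ℝ)..a, s * L s
        = ∫ s in a..b, s * L s :=
      intervalIntegral.integral_interval_sub_left hint1b hint1a
    have e2 : (∫ s in (0:ℝ)..b, L s / F s) - ∫ s in (0:ℝ)..a, L s / F s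
        = ∫ s in a..b, L s / F s :=
      intervalIntegral.integral_interval_sub_left hint2b hint2a
    have n1 : (0:ℝ) ≤ ∫ s in a..b, s * L s :=
      intervalIntegral.integral_nonneg hab
        (fun s hs => mul_nonneg (ha.trans hs.1) (hLnn s))
    have n2 : (0:ℝ) ≤ ∫ s in a..b, L s / F s :=
      intervalIntegral.integral_nonneg hab
        (fun s hs => div_nonneg (hLnn s) (hFpos s (ha.trans hs.1)).le)
    linarith
  · -- bound
    intro t ht
    rw [hcongr1 t ht, hcongr2 t ht]
    have hA : (∫ s in (0:ℝ)..t, s * L s) ≤ b0 := by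
      rw [← hcongr1 t ht]
      exact htail _ hb0int (fun s hs => mul_nonneg (le_of_lt hs) (hlnn s (le_of_lt hs))) t ht
    have hB := hkey t ht
    have hlog : Real.log (F t) ≤ Real.log (h * (1 + b0) + b1) :=
      Real.log_le_log (hFpos t ht) (hFle t ht)
    linarith
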